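/- Fix x ∈ [0,1]. The evaluation operator E : C([0,1], ℝ) → ℝ defined by E(η) = φ_η(x), where φ_η(x) = (∫₀ˣ exp(∫₀ˢ η(t) dt) ds)/(∫₀¹ exp(∫₀ˢ η(t) dt) ds), is Fréchet differentiable at every η ∈ C([0,1], ℝ) (with respect to the supremum norm), and its derivative is the bounded linear map Δη ↦ ( (∫₀ˣ (∫₀ˢ Δη(t) dt) · exp(∫₀ˢ η(t) dt) ds) / (∫₀ˣ exp(∫₀ˢ η(t) dt) ds) − (∫₀¹ (∫₀ˢ Δη(t) dt) · exp(∫₀ˢ η(t) dt) ds) / (∫₀¹ exp(∫₀ˢ η(t) dt) ds) ) · φ_η(x). -/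

import Mathlib

set_option synthInstance.maxHeartbeats 1000000
set_option maxHeartbeats 1000000


open Set MeasureTheory

/-- Extension of a continuous function on `[0,1]` to `ℝ` (constant outside `[0,1]`). -/
noncomputable def extIcc (η : C(Set.Icc (0:ℝ) 1, ℝ)) : ℝ → ℝ :=
  fun t => η (Set.projIcc (0:ℝ) 1 zero_le_one t)

/-- The diffeomorphism of `[0,1]` with nonlinearity `η`:
`φ_η(x) = (∫₀ˣ exp(∫₀ˢ η)) / (∫₀¹ exp(∫₀ˢ η))`. -/
noncomputable def phiEta (η : C(Set.Icc (0:ℝ) 1, ℝ)) (x : ℝ) : ℝ :=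
  (∫ s in (0:ℝ)..x, Real.exp (∫ t in (0:ℝ)..s, extIcc η t)) /
  (∫ s in (0:ℝ)..1, Real.exp (∫ t in (0:ℝ)..s, extIcc η t))

noncomputable instance : NormedAddCommGroup (C(Set.Icc (0:ℝ) 1, ℝ) →L[ℝ] ℝ) :=
  inferInstance

instance : TopologicalSpace.PseudoMetrizableSpace (C(Set.Icc (0:ℝ) 1, ℝ) →L[ℝ] ℝ) :=
  inferInstance

namespace EvalOpAux

lemma extIcc_cont (η : C(Set.Icc (0:ℝ) 1, ℝ)) : Continuous (extIcc η) :=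
  η.continuous.comp continuous_projIcc

lemma extIcc_norm_le (η : C(Set.Icc (0:ℝ) 1, ℝ)) (t : ℝ) : ‖extIcc η t‖ ≤ ‖η‖ :=
  η.norm_coe_le_norm _

lemma intInt (η : C(Set.Icc (0:ℝ) 1, ℝ)) (a b : ℝ) :
    IntervalIntegrable (extIcc η) volume a b :=
  (extIcc_cont η).intervalIntegrable _ _

/-- The continuous linear map `ζ ↦ ∫₀ˢ extIcc ζ`. -/
noncomputable def intCLM (s : ℝ) : C(Set.Icc (0:ℝ) 1, ℝ) →L[ℝ] ℝ :=
  LinearMap.mkContinuous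
    { toFun := fun ζ => ∫ t in (0:ℝ)..s, extIcc ζ t
      map_add' := fun ζ ξ => by
        have h : extIcc (ζ + ξ) = fun t => extIcc ζ t + extIcc ξ t := rfl
        show (∫ t in (0:ℝ)..s, extIcc (ζ + ξ) t) =
          (∫ t in (0:ℝ)..s, extIcc ζ t) + ∫ t in (0:ℝ)..s, extIcc ξ t
        rw [h, intervalIntegral.integral_add (intInt ζ 0 s) (intInt ξ 0 s)]
      map_smul' := fun c ζ => by
        have h : extIcc (c • ζ) = fun t => c • extIcc ζ t := rfl
        show (∫ t in (0:ℝ)..s, extIcc (c • ζ) t) = c • ∫ t in (0:ℝ)..s, extIcc ζ t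
        rw [h, intervalIntegral.integral_smul] }
    |s|
    (fun ζ => by
      have h := intervalIntegral.norm_integral_le_of_norm_le_const
        (C := ‖ζ‖) (f := fun t => extIcc ζ t) (a := (0:ℝ)) (b := s)
        (fun t _ => extIcc_norm_le ζ t)
      simpa [mul_comm] using h)

lemma intCLM_apply (s : ℝ) (ζ : C(Set.Icc (0:ℝ) 1, ℝ)) :
    intCLM s ζ = ∫ t in (0:ℝ)..s, extIcc ζ t := rfl

lemma intCLM_norm_le (s : ℝ) : ‖intCLM s‖ ≤ |s| :=
  LinearMap.mkContinuous_norm_le _ (abs_nonneg s) _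

lemma intCLM_lip : LipschitzWith 1 intCLM := by
  apply LipschitzWith.of_dist_le_mul
  intro s s'
  simp only [dist_eq_norm, NNReal.coe_one, one_mul]
  refine ContinuousLinearMap.opNorm_le_bound _ (by positivity) fun ζ => ?_
  have h1 : (intCLM s - intCLM s') ζ = ∫ t in s'..s, extIcc ζ t := by
    simp only [ContinuousLinearMap.sub_apply, intCLM_apply]
    rw [intervalIntegral.integral_interval_sub_left (intInt ζ 0 s) (intInt ζ 0 s')]
  rw [h1]
  have h := intervalIntegral.norm_integral_le_of_norm_le_const
    (C := ‖ζ‖) (f := fun t => extIcc ζ t) (a := s') (b := s)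
    (fun t _ => extIcc_norm_le ζ t)
  calc ‖∫ t in s'..s, extIcc ζ t‖ ≤ ‖ζ‖ * |s - s'| := h
    _ = ‖s - s'‖ * ‖ζ‖ := by rw [Real.norm_eq_abs]; ring

lemma intCLM_cont : Continuous intCLM := intCLM_lip.continuous

lemma cont_inner (ζ : C(Set.Icc (0:ℝ) 1, ℝ)) : Continuous fun s => intCLM s ζ :=
  intCLM_cont.clm_apply continuous_const

lemma hasFDeriv_exp_int (s : ℝ) (ζ : C(Set.Icc (0:ℝ) 1, ℝ)) :
    HasFDerivAt (fun ξ => Real.exp (intCLM s ξ))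
      (Real.exp (intCLM s ζ) • intCLM s) ζ :=
  (intCLM s).hasFDerivAt.exp

/-- Differentiability of `ζ ↦ ∫₀ᵇ exp(∫₀ˢ ζ)` for `b ∈ [0,1]`. -/
lemma keyDeriv (η : C(Set.Icc (0:ℝ) 1, ℝ)) (b : ℝ) (hb : b ∈ Set.Icc (0:ℝ) 1) :
    HasFDerivAt (fun ζ : C(Set.Icc (0:ℝ) 1, ℝ) => ∫ s in (0:ℝ)..b, Real.exp (intCLM s ζ))
      (∫ s in (0:ℝ)..b, Real.exp (intCLM s η) • intCLM s) η := by
  apply hasFDerivAt_integral_of_dominated_of_fderiv_le''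
    (F := fun ζ s => Real.exp (intCLM s ζ))
    (F' := fun ζ s => Real.exp (intCLM s ζ) • intCLM s)
    (bound := fun _ => Real.exp (‖η‖ + 1)) (s := Metric.ball η 1) (Metric.ball_mem_nhds η one_pos)
  · filter_upwards with ζ
    exact ((Real.continuous_exp.comp (cont_inner ζ)).aestronglyMeasurable).restrict
  · exact (Real.continuous_exp.comp (cont_inner η)).intervalIntegrable _ _
  · exact (((Real.continuous_exp.comp (cont_inner η)).smul intCLM_cont).aestronglyMeasurable).restrict
  · have hsub : Set.uIoc (0:ℝ) b ⊆ Set.Icc (0:ℝ) 1 := by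
      rw [Set.uIoc_of_le hb.1]
      exact fun t ht => ⟨le_of_lt ht.1, le_trans ht.2 hb.2⟩
    filter_upwards [ae_restrict_mem measurableSet_uIoc] with t ht ζ hζ
    have ht1 : |t| ≤ 1 := by
      have := hsub ht
      rw [abs_of_nonneg this.1]; exact this.2
    have hnorm : ‖intCLM t‖ ≤ 1 := le_trans (intCLM_norm_le t) ht1
    have hval : intCLM t ζ ≤ ‖η‖ + 1 := by
      calc intCLM t ζ ≤ ‖intCLM t ζ‖ := le_abs_self _
        _ ≤ ‖intCLM t‖ * ‖ζ‖ := (intCLM t).le_opNorm ζ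
        _ ≤ 1 * ‖ζ‖ := by
            exact mul_le_mul_of_nonneg_right hnorm (norm_nonneg _)
        _ = ‖ζ‖ := one_mul _
        _ ≤ ‖η‖ + 1 := by
            have := mem_ball_iff_norm.mp hζ
            calc ‖ζ‖ = ‖η + (ζ - η)‖ := by ring_nf
              _ ≤ ‖η‖ + ‖ζ - η‖ := norm_add_le _ _
              _ ≤ ‖η‖ + 1 := by linarith
    refine le_trans (ContinuousLinearMap.opNorm_smul_le _ _) ?_
    rw [Real.norm_eq_abs, abs_of_pos (Real.exp_pos _)]
    calc Real.exp (intCLM t ζ) * ‖intCLM t‖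
        ≤ Real.exp (‖η‖ + 1) * 1 :=
          mul_le_mul (Real.exp_le_exp.mpr hval) hnorm (ContinuousLinearMap.opNorm_nonneg _) (Real.exp_pos _).le
      _ = Real.exp (‖η‖ + 1) := mul_one _
  · exact intervalIntegrable_const
  · filter_upwards with t ζ _
    exact hasFDeriv_exp_int t ζ

lemma exp_int_pos (η : C(Set.Icc (0:ℝ) 1, ℝ)) {b : ℝ} (hb : 0 < b) :
    0 < ∫ s in (0:ℝ)..b, Real.exp (intCLM s η) :=
  intervalIntegral.intervalIntegral_pos_of_pos
    ((Real.continuous_exp.comp (cont_inner η)).intervalIntegrable _ _)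
    (fun s => Real.exp_pos _) hb

end EvalOpAux

open EvalOpAux in
/-- The evaluation operator `η ↦ φ_η(x)` on `C([0,1],ℝ)` (with the sup norm) is Fréchet
differentiable at every `η`. -/
theorem evaluation_operator_hasFDerivAt (x : ℝ) (hx : x ∈ Set.Icc (0:ℝ) 1)
    (η : C(Set.Icc (0:ℝ) 1, ℝ)) :
    ∃ L : C(Set.Icc (0:ℝ) 1, ℝ) →L[ℝ] ℝ,
      HasFDerivAt (fun ζ => phiEta ζ x) L η ∧
      ∀ Δη : C(Set.Icc (0:ℝ) 1, ℝ),
        L Δη =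
          ((∫ s in (0:ℝ)..x, (∫ t in (0:ℝ)..s, extIcc Δη t) *
                Real.exp (∫ t in (0:ℝ)..s, extIcc η t)) /
              (∫ s in (0:ℝ)..x, Real.exp (∫ t in (0:ℝ)..s, extIcc η t)) -
            (∫ s in (0:ℝ)..1, (∫ t in (0:ℝ)..s, extIcc Δη t) *
                Real.exp (∫ t in (0:ℝ)..s, extIcc η t)) /
              (∫ s in (0:ℝ)..1, Real.exp (∫ t in (0:ℝ)..s, extIcc η t)))
            * phiEta η x := by
  classical
  set Nval : ℝ := ∫ s in (0:ℝ)..x, Real.exp (intCLM s η) with hNval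
  set Dval : ℝ := ∫ s in (0:ℝ)..1, Real.exp (intCLM s η) with hDval
  set N' : C(Set.Icc (0:ℝ) 1, ℝ) →L[ℝ] ℝ :=
    ∫ s in (0:ℝ)..x, Real.exp (intCLM s η) • intCLM s with hN'
  set D' : C(Set.Icc (0:ℝ) 1, ℝ) →L[ℝ] ℝ :=
    ∫ s in (0:ℝ)..1, Real.exp (intCLM s η) • intCLM s with hD'
  have hDpos : 0 < Dval := exp_int_pos η one_pos
  have hDne : Dval ≠ 0 := ne_of_gt hDpos
  have hN := keyDeriv η x hx
  have hD := keyDeriv η 1 ⟨zero_le_one, le_refl 1⟩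
  have hInv : HasFDerivAt (fun ζ : C(Set.Icc (0:ℝ) 1, ℝ) =>
      (∫ s in (0:ℝ)..1, Real.exp (intCLM s ζ))⁻¹) ((-(Dval ^ 2)⁻¹) • D') η :=
    (hasDerivAt_inv hDne).comp_hasFDerivAt η hD
  have hL : HasFDerivAt (fun ζ : C(Set.Icc (0:ℝ) 1, ℝ) =>
      (∫ s in (0:ℝ)..x, Real.exp (intCLM s ζ)) *
        (∫ s in (0:ℝ)..1, Real.exp (intCLM s ζ))⁻¹)
      (Nval • ((-(Dval ^ 2)⁻¹) • D') + Dval⁻¹ • N') η := hN.mul hInv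
  refine ⟨Nval • ((-(Dval ^ 2)⁻¹) • D') + Dval⁻¹ • N', ?_, ?_⟩
  · have hfun : (fun ζ : C(Set.Icc (0:ℝ) 1, ℝ) => phiEta ζ x) =
        fun ζ => (∫ s in (0:ℝ)..x, Real.exp (intCLM s ζ)) *
          (∫ s in (0:ℝ)..1, Real.exp (intCLM s ζ))⁻¹ := by
      funext ζ
      rw [phiEta, div_eq_mul_inv]
      rfl
    rw [hfun]
    exact hL
  · intro Δη
    -- integrability of the CLM-valued integrand
    have hint : IntervalIntegrable (fun s => Real.exp (intCLM s η) • intCLM s)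
        volume (0:ℝ) 1 := by
      exact ((Real.continuous_exp.comp (cont_inner η)).smul intCLM_cont).intervalIntegrable _ _
    have hintx : IntervalIntegrable (fun s => Real.exp (intCLM s η) • intCLM s)
        volume (0:ℝ) x := by
      exact ((Real.continuous_exp.comp (cont_inner η)).smul intCLM_cont).intervalIntegrable _ _
    have hN'app : N' Δη = ∫ s in (0:ℝ)..x,
        (∫ t in (0:ℝ)..s, extIcc Δη t) * Real.exp (intCLM s η) := by
      rw [hN', ContinuousLinearMap.intervalIntegral_apply hintx Δη]
      apply intervalIntegral.integral_congr
      intro s _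
      simp [intCLM_apply, mul_comm]
    have hD'app : D' Δη = ∫ s in (0:ℝ)..1,
        (∫ t in (0:ℝ)..s, extIcc Δη t) * Real.exp (intCLM s η) := by
      rw [hD', ContinuousLinearMap.intervalIntegral_apply hint Δη]
      apply intervalIntegral.integral_congr
      intro s _
      simp [intCLM_apply, mul_comm]
    have hNint : (∫ s in (0:ℝ)..x, Real.exp (∫ t in (0:ℝ)..s, extIcc η t)) = Nval := rfl
    have hDint : (∫ s in (0:ℝ)..1, Real.exp (∫ t in (0:ℝ)..s, extIcc η t)) = Dval := rfl
    set A : ℝ := ∫ s in (0:ℝ)..x, (∫ t in (0:ℝ)..s, extIcc Δη t) *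
        Real.exp (∫ t in (0:ℝ)..s, extIcc η t) with hA
    set B : ℝ := ∫ s in (0:ℝ)..1, (∫ t in (0:ℝ)..s, extIcc Δη t) *
        Real.exp (∫ t in (0:ℝ)..s, extIcc η t) with hB
    have hN'A : N' Δη = A := hN'app
    have hD'B : D' Δη = B := hD'app
    have hphi : phiEta η x = Nval / Dval := rfl
    have happ : (Nval • ((-(Dval ^ 2)⁻¹) • D') + Dval⁻¹ • N') Δη =
        Nval * (-(Dval ^ 2)⁻¹ * B) + Dval⁻¹ * A := by
      simp [ContinuousLinearMap.add_apply, ContinuousLinearMap.smul_apply, hN'A, hD'B,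
        smul_eq_mul, mul_assoc]
    rw [happ, hNint, hDint, hphi]
    rcases eq_or_lt_of_le hx.1 with h0 | hxpos
    · have hx0 : x = 0 := h0.symm
      have hN0 : Nval = 0 := by rw [hNval, hx0, intervalIntegral.integral_same]
      have hA0 : A = 0 := by rw [hA, hx0, intervalIntegral.integral_same]
      rw [hN0, hA0]
      simp
    · have hNpos : 0 < Nval := exp_int_pos η hxpos
      have hNne : Nval ≠ 0 := ne_of_gt hNpos
      field_simp
      ring
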